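/- Let (X, Z) be a random pair in ℝ^d × ℝ with P(X = 0) = 0, where ℝ^d and ℝ^{d+1} carry norms ‖·‖ such that the canonical basis vectors have norm one and ‖(x, 0)‖ = ‖x‖ for all x ∈ ℝ^d. Assume (X, Z) is regularly varying in ℝ^{d+1}: t ↦ P(‖(X,Z)‖ > t) is regularly varying with index α > 0 and the conditional law of t⁻¹(X, Z) given ‖(X, Z)‖ > t converges weakly, as t → ∞, to a probability distribution Π_∞ supported on {(x, z) : ‖(x, z)‖ > 1}, with Π_∞({(x, z) : ‖x‖ > 1}) > 0. Define Y = Z/‖X‖. Then the pair (X, Y) satisfies: t ↦ P(‖X‖ > t) is regularly varying with index α > 0, and the conditional law of (t⁻¹X, Y) given ‖X‖ > t converges weakly, as t → ∞, to a probability distribution P_∞ on {(x, y) ∈ ℝ^{d+1} : ‖x‖ > 1}. -/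

import Mathlib

set_option linter.unusedSectionVars false
set_option linter.unusedVariables false
set_option maxHeartbeats 1000000

open MeasureTheory ProbabilityTheory Filter Set BoundedContinuousFunction
open scoped ENNReal Topology

/-- Weak convergence, as `t → ∞`, of a family of (finite) measures to a limit measure,
tested against bounded continuous functions. -/
def TendstoWeakly {E : Type*} [MeasurableSpace E] [TopologicalSpace E]
    (μ : ℝ → Measure E) (ν : Measure E) : Prop :=
  ∀ f : BoundedContinuousFunction E ℝ,
    Filter.Tendsto (fun t => ∫ x, f x ∂(μ t)) Filter.atTop (𝓝 (∫ x, f x ∂ν))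

/-- `N` is a norm function on the real vector space `E`. -/
def IsNormFun {E : Type*} [AddCommGroup E] [Module ℝ E] (N : E → ℝ) : Prop :=
  (∀ x y, N (x + y) ≤ N x + N y) ∧ (∀ (c : ℝ) x, N (c • x) = |c| * N x) ∧
    (∀ x, x ≠ 0 → 0 < N x)

/-- The survival function of (the real random variable) `R` is regularly varying with
index `α`:  `P(R > tx)/P(R > t) → x^{-α}` for all `x > 0`. -/
def SurvivalRegVarying {Ω : Type*} [MeasureSpace Ω] (R : Ω → ℝ) (α : ℝ) : Prop :=
  ∀ x : ℝ, 0 < x → Filter.Tendsto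
    (fun t => (ℙ {ω | t * x < R ω}).toReal / (ℙ {ω | t < R ω}).toReal)
    Filter.atTop (𝓝 (x ^ (-α)))


namespace IsNormFun

variable {E : Type*} [AddCommGroup E] [Module ℝ E] {N : E → ℝ}

lemma map_zero (h : IsNormFun N) : N 0 = 0 := by
  have := h.2.1 0 0
  simpa using this

lemma map_neg (h : IsNormFun N) (x : E) : N (-x) = N x := by
  have := h.2.1 (-1) x
  simpa using this

lemma nonneg (h : IsNormFun N) (x : E) : 0 ≤ N x := by
  have h1 := h.1 x (-x)
  rw [add_neg_cancel, h.map_zero, h.map_neg] at h1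
  linarith

lemma sub_le (h : IsNormFun N) (x y : E) : N x - N y ≤ N (x - y) := by
  have := h.1 (x - y) y
  simp only [sub_add_cancel] at this
  linarith

lemma abs_sub_le (h : IsNormFun N) (x y : E) : |N x - N y| ≤ N (x - y) := by
  rw [abs_sub_le_iff]
  refine ⟨h.sub_le x y, ?_⟩
  have := h.sub_le y x
  rw [← h.map_neg (y - x), neg_sub] at this
  exact this

end IsNormFun

/-- continuity of a norm-fun given a continuous bound vanishing at 0 -/
lemma IsNormFun.continuous_of_bound {E : Type*} [NormedAddCommGroup E] [NormedSpace ℝ E]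
    {N : E → ℝ} (h : IsNormFun N) (g : E → ℝ) (hg : Continuous g) (hg0 : g 0 = 0)
    (hle : ∀ x, N x ≤ g x) : Continuous N := by
  rw [continuous_iff_continuousAt]
  intro y
  have hup : ∀ x : E, N x ≤ N y + g (x - y) := by
    intro x
    have h1 := h.sub_le x y
    have h2 := hle (x - y)
    linarith
  have hlo : ∀ x : E, N y - g (x - y) ≤ N x := by
    intro x
    have h1 := h.sub_le y x
    have h2 := hle (x - y)
    have h3 : N (y - x) = N (x - y) := by rw [← h.map_neg (y-x), neg_sub]
    linarith
  have hgc : Tendsto (fun x : E => g (x - y)) (𝓝 y) (𝓝 0) := by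
    have : Continuous fun x : E => g (x - y) := hg.comp (continuous_id.sub continuous_const)
    simpa [sub_self, hg0] using this.tendsto y
  have h1 : Tendsto (fun x : E => N y - g (x - y)) (𝓝 y) (𝓝 (N y)) := by
    simpa using (tendsto_const_nhds (x := N y) (f := 𝓝 y)).sub hgc
  have h2 : Tendsto (fun x : E => N y + g (x - y)) (𝓝 y) (𝓝 (N y)) := by
    simpa using (tendsto_const_nhds (x := N y) (f := 𝓝 y)).add hgc
  exact tendsto_of_tendsto_of_tendsto_of_le_of_le h1 h2 hlo hup


section Aux
variable {E : Type*} [AddCommGroup E] [Module ℝ E] {N : E → ℝ}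

lemma normfun_sum_le {ι : Type*} (h : IsNormFun N) (s : Finset ι) (f : ι → E) :
    N (∑ i ∈ s, f i) ≤ ∑ i ∈ s, N (f i) := by
  classical
  induction s using Finset.cons_induction with
  | empty => simp [h.map_zero]
  | cons i s hi ih =>
    rw [Finset.sum_cons, Finset.sum_cons]
    exact le_trans (h.1 _ _) (by linarith)

end Aux

/-- Bound for a norm-fun on `Fin d → ℝ`. -/
lemma normfun_pi_le {d : ℕ} {N : (Fin d → ℝ) → ℝ} (h : IsNormFun N) (x : Fin d → ℝ) :
    N x ≤ ∑ i, |x i| * N (Pi.single i 1) := by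
  have hx : x = ∑ i, x i • (Pi.single i (1 : ℝ) : Fin d → ℝ) := by
    funext j
    simp [Finset.sum_apply, Pi.single_apply]
  calc N x = N (∑ i, x i • (Pi.single i (1:ℝ) : Fin d → ℝ)) := by rw [← hx]
    _ ≤ ∑ i, N (x i • (Pi.single i (1:ℝ) : Fin d → ℝ)) := normfun_sum_le h _ _
    _ = ∑ i, |x i| * N (Pi.single i 1) := by
        refine Finset.sum_congr rfl fun i _ => h.2.1 _ _


lemma IsNormFun.map_zero' {E : Type*} [AddCommGroup E] [Module ℝ E] {N : E → ℝ}
    (h : IsNormFun N) : N 0 = 0 := by have := h.2.1 0 0; simpa using this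

/-- min of a positive continuous norm-like function on the sphere gives a lower bound. -/
lemma normfun_lower_bound {F : Type*} [NormedAddCommGroup F] [NormedSpace ℝ F] [ProperSpace F]
    {N : F → ℝ} (h : IsNormFun N) (hc : Continuous N) (w : F) (hw : ‖w‖ = 1) :
    ∃ m : ℝ, 0 < m ∧ ∀ v, m * ‖v‖ ≤ N v := by
  obtain ⟨u, hu, hmin⟩ := (isCompact_sphere (0:F) 1).exists_isMinOn
    ⟨w, by simpa [mem_sphere_iff_norm] using hw⟩ hc.continuousOn
  have hune : u ≠ 0 := by
    intro h0
    rw [mem_sphere_iff_norm, h0] at hu; simp at hu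
  refine ⟨N u, h.2.2 u hune, fun v => ?_⟩
  rcases eq_or_ne v 0 with rfl | hv
  · simp [h.map_zero']
  · have hnv : (0:ℝ) < ‖v‖ := norm_pos_iff.mpr hv
    have hu' : (‖v‖⁻¹ • v) ∈ Metric.sphere (0:F) 1 := by
      simp [mem_sphere_iff_norm, norm_smul, abs_of_pos (inv_pos.mpr hnv),
        inv_mul_cancel₀ hnv.ne']
    have hle : N u ≤ N (‖v‖⁻¹ • v) := (isMinOn_iff.mp hmin) _ hu'
    rw [h.2.1, abs_inv, abs_norm] at hle
    calc N u * ‖v‖ ≤ (‖v‖⁻¹ * N v) * ‖v‖ := by nlinarith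
      _ = N v := by field_simp


section Sandwich

variable {E : Type*} [MeasurableSpace E] [TopologicalSpace E] [OpensMeasurableSpace E]

/-- The continuous approximations to indicators of superlevel sets. -/
noncomputable def levelφ (h : E → ℝ) (c δ : ℝ) (q : E) : ℝ :=
  max 0 (min 1 ((h q - c) / δ))

lemma levelφ_nonneg (h : E → ℝ) (c δ : ℝ) (q : E) : 0 ≤ levelφ h c δ q := le_max_left _ _

lemma levelφ_le_one (h : E → ℝ) (c δ : ℝ) (q : E) : levelφ h c δ q ≤ 1 :=
  max_le zero_le_one (min_le_left _ _)

lemma levelφ_eq_zero (h : E → ℝ) {c δ : ℝ} (hδ : 0 < δ) {q : E} (hq : h q ≤ c) :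
    levelφ h c δ q = 0 := by
  have : (h q - c) / δ ≤ 0 := div_nonpos_of_nonpos_of_nonneg (by linarith) hδ.le
  simp only [levelφ]
  rw [max_eq_left]
  exact le_trans (min_le_right _ _) this

lemma levelφ_eq_one (h : E → ℝ) {c δ : ℝ} (hδ : 0 < δ) {q : E} (hq : c + δ ≤ h q) :
    levelφ h c δ q = 1 := by
  have h1 : (1:ℝ) ≤ (h q - c) / δ := (le_div_iff₀ hδ).mpr (by linarith)
  simp only [levelφ]
  rw [min_eq_left h1, max_eq_right zero_le_one]

lemma levelφ_continuous {h : E → ℝ} (hh : Continuous h) (c : ℝ) {δ : ℝ} (hδ : 0 < δ) :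
    Continuous (levelφ h c δ) :=
  continuous_const.max (continuous_const.min ((hh.sub continuous_const).div_const δ))

/-- bundled version -/
noncomputable def levelφB {h : E → ℝ} (hh : Continuous h) (c : ℝ) {δ : ℝ} (hδ : 0 < δ) :
    BoundedContinuousFunction E ℝ :=
  BoundedContinuousFunction.ofNormedAddCommGroup (levelφ h c δ) (levelφ_continuous hh c hδ) 1
    (fun q => by
      rw [Real.norm_eq_abs, abs_le]
      exact ⟨by linarith [levelφ_nonneg h c δ q], levelφ_le_one h c δ q⟩)

lemma levelφB_apply {h : E → ℝ} (hh : Continuous h) (c : ℝ) {δ : ℝ} (hδ : 0 < δ) (q : E) :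
    levelφB hh c hδ q = levelφ h c δ q := rfl

lemma levelφ_mono_pt {h : E → ℝ} {c δ : ℝ} (hδ : 0 < δ) (q : E) :
    levelφ h c δ q ≤ levelφ h (c - δ) δ q := by
  rcases le_or_gt (h q) c with hc | hc
  · rw [levelφ_eq_zero h hδ hc]; exact levelφ_nonneg _ _ _ _
  · rw [levelφ_eq_one h hδ (by linarith : (c - δ) + δ ≤ h q)]
    exact levelφ_le_one _ _ _ _

end Sandwich

section Main

variable {E : Type*} [MeasurableSpace E] [TopologicalSpace E] [OpensMeasurableSpace E]

lemma integrable_indicator_bdd {m : Measure E} [IsProbabilityMeasure m]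
    {A : Set E} (hA : MeasurableSet A) {g : E → ℝ} (hgm : Measurable g)
    {M : ℝ} (hM : 0 ≤ M) (hgb : ∀ q, |g q| ≤ M) :
    Integrable (A.indicator g) m := by
  refine Integrable.mono' (integrable_const M) ((hgm.indicator hA).aestronglyMeasurable)
    (Filter.Eventually.of_forall fun q => ?_)
  rw [Real.norm_eq_abs]
  by_cases hq : q ∈ A
  · rw [Set.indicator_of_mem hq]; exact hgb q
  · rw [Set.indicator_of_notMem hq]; simpa using hM

/-- Key sandwich lemma: integrals of `g` restricted to the open superlevel set `{s₀ < h}`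
converge, provided the level `s₀` is an atomless level for the limit measure. -/
lemma tendsto_integral_indicator_superlevel
    (μ : ℝ → Measure E) (hPμ : ∀ t, IsProbabilityMeasure (μ t))
    (ν : Measure E) [IsProbabilityMeasure ν]
    (hconv : ∀ f : BoundedContinuousFunction E ℝ,
      Tendsto (fun t => ∫ x, f x ∂(μ t)) atTop (𝓝 (∫ x, f x ∂ν)))
    {h : E → ℝ} (hh : Continuous h) {s₀ : ℝ} (hs₀ : 0 < s₀)
    (hatom : ν {q | h q = s₀} = 0)
    {g : E → ℝ} (hgm : Measurable g) {M : ℝ} (hM : 0 ≤ M) (hgb : ∀ q, |g q| ≤ M)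
    (hgc : ∀ q, h q ≠ 0 → ContinuousAt g q) :
    Tendsto (fun t => ∫ q, Set.indicator {q | s₀ < h q} g q ∂(μ t)) atTop
      (𝓝 (∫ q, Set.indicator {q | s₀ < h q} g q ∂ν)) := by
  have := fun t => hPμ t
  set A : Set E := {q | s₀ < h q} with hA
  have hAmeas : MeasurableSet A := measurableSet_lt measurable_const hh.measurable
  rw [Metric.tendsto_nhds]
  intro ε hε
  set K : ℝ := M + 1 with hK
  have hKpos : (0:ℝ) < K := by linarith
  set ε' : ℝ := ε / (8 * K) with hε'
  have hε'pos : 0 < ε' := by positivity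
  -- step 1 : choose δ = 1/(n+1) with ν-mass of the band < ε'
  set B : ℕ → Set E := fun n => {q | s₀ - 1/(n+1) < h q ∧ h q < s₀ + 1/(n+1)} with hBdef
  have hBmeas : ∀ n, MeasurableSet (B n) :=
    fun n => (measurableSet_lt measurable_const hh.measurable).inter
      (measurableSet_lt hh.measurable measurable_const)
  have hBanti : Antitone B := by
    intro a b hab q hq
    have h1 : (1:ℝ)/(b+1) ≤ 1/(a+1) := by
      apply one_div_le_one_div_of_le (by positivity)
      exact_mod_cast by omega
    exact ⟨by linarith [hq.1], by linarith [hq.2]⟩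
  have hBiInter : (⋂ n, B n) ⊆ {q | h q = s₀} := by
    intro q hq
    simp only [Set.mem_iInter] at hq
    have h1 : ∀ n : ℕ, |h q - s₀| < 1/(n+1) := by
      intro n
      rcases hq n with ⟨ha, hb⟩
      rw [abs_lt]; constructor <;> linarith
    have h2 : |h q - s₀| ≤ 0 := by
      by_contra hcon
      push_neg at hcon
      obtain ⟨n, hn⟩ := exists_nat_one_div_lt hcon
      exact absurd (h1 n) (by push_neg; linarith [hn])
    have : |h q - s₀| = 0 := le_antisymm h2 (abs_nonneg _)
    have := abs_eq_zero.mp this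
    simpa [Set.mem_setOf_eq] using by linarith
  have hBlim : Tendsto (fun n => (ν (B n)).toReal) atTop (𝓝 0) := by
    have h1 : Tendsto (ν ∘ B) atTop (𝓝 (ν (⋂ n, B n))) :=
      tendsto_measure_iInter_atTop (fun n => (hBmeas n).nullMeasurableSet) hBanti
        ⟨0, measure_ne_top _ _⟩
    have h2 : ν (⋂ n, B n) = 0 :=
      measure_mono_null hBiInter hatom
    rw [h2] at h1
    have := (ENNReal.tendsto_toReal (a := 0) (by simp)).comp h1
    simpa [Function.comp_def] using this
  obtain ⟨n, hn⟩ : ∃ n : ℕ, (ν (B n)).toReal < ε' := by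
    rcases (Metric.tendsto_atTop.mp hBlim) ε' hε'pos with ⟨n, hn⟩
    exact ⟨n, by simpa [Real.dist_eq, abs_of_nonneg ENNReal.toReal_nonneg] using hn n le_rfl⟩
  set δ : ℝ := 1/(n+1) with hδdef
  have hδ : (0:ℝ) < δ := by positivity
  -- the two approximations and the product function
  set φ₁ : BoundedContinuousFunction E ℝ := levelφB hh s₀ hδ with hφ₁
  set φ₂ : BoundedContinuousFunction E ℝ := levelφB hh (s₀ - δ) hδ with hφ₂
  have hGcont : Continuous (fun q => g q * levelφ h s₀ δ q) := by
    rw [continuous_iff_continuousAt]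
    intro q
    by_cases hq : h q = 0
    · have hopen : IsOpen {q' : E | h q' < s₀} := isOpen_lt hh continuous_const
      have hmem : q ∈ {q' : E | h q' < s₀} := by simp [Set.mem_setOf_eq, hq, hs₀]
      have heq : (fun q' => g q' * levelφ h s₀ δ q') =ᶠ[𝓝 q] (fun _ => (0:ℝ)) := by
        filter_upwards [hopen.mem_nhds hmem] with q' hq'
        rw [levelφ_eq_zero h hδ (le_of_lt hq'), mul_zero]
      exact (continuousAt_const (y := (0:ℝ))).congr heq.symm
    · exact ((hgc q hq).mul ((levelφ_continuous hh s₀ hδ).continuousAt))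
  set G : BoundedContinuousFunction E ℝ :=
    BoundedContinuousFunction.ofNormedAddCommGroup _ hGcont M (fun q => by
      rw [Real.norm_eq_abs, abs_mul]
      calc |g q| * |levelφ h s₀ δ q| ≤ M * 1 := by
            apply mul_le_mul (hgb q) _ (abs_nonneg _) hM
            rw [abs_of_nonneg (levelφ_nonneg h s₀ δ q)]
            exact levelφ_le_one h s₀ δ q
        _ = M := mul_one M) with hG
  -- pointwise facts
  have hptG : ∀ q, |A.indicator g q - G q| ≤ M * (φ₂ q - φ₁ q) := by
    intro q
    have hGq : G q = g q * levelφ h s₀ δ q := rfl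
    have hφ₁q : φ₁ q = levelφ h s₀ δ q := rfl
    have hφ₂q : φ₂ q = levelφ h (s₀ - δ) δ q := rfl
    rw [hGq, hφ₁q, hφ₂q]
    by_cases hq : q ∈ A
    · have hφ₂1 : levelφ h (s₀ - δ) δ q = 1 :=
        levelφ_eq_one h hδ (by simp only [hA, Set.mem_setOf_eq] at hq; linarith)
      rw [Set.indicator_of_mem hq, hφ₂1]
      have h1 : g q - g q * levelφ h s₀ δ q = g q * (1 - levelφ h s₀ δ q) := by ring
      rw [h1, abs_mul]
      have h2 : |1 - levelφ h s₀ δ q| = 1 - levelφ h s₀ δ q :=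
        abs_of_nonneg (by linarith [levelφ_le_one h s₀ δ q])
      rw [h2]
      exact mul_le_mul_of_nonneg_right (hgb q) (by linarith [levelφ_le_one h s₀ δ q])
        |>.trans (le_refl _)
    · have hφ₁0 : levelφ h s₀ δ q = 0 :=
        levelφ_eq_zero h hδ (by simp only [hA, Set.mem_setOf_eq, not_lt] at hq; exact hq)
      rw [Set.indicator_of_notMem hq, hφ₁0, mul_zero, sub_zero, abs_zero]
      have := levelφ_mono_pt (h := h) (c := s₀) hδ q
      rw [hφ₁0] at this
      nlinarith [this, hM]
  have hptB : ∀ q, φ₂ q - φ₁ q ≤ (B n).indicator (1 : E → ℝ) q := by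
    intro q
    have hφ₁q : φ₁ q = levelφ h s₀ δ q := rfl
    have hφ₂q : φ₂ q = levelφ h (s₀ - δ) δ q := rfl
    rw [hφ₁q, hφ₂q]
    rcases le_or_gt (h q) (s₀ - δ) with hc | hc
    · rw [levelφ_eq_zero h hδ hc, levelφ_eq_zero h hδ (by linarith)]
      simp [Set.indicator_apply]
      split <;> norm_num
    · rcases le_or_gt (s₀ + δ) (h q) with hc2 | hc2
      · rw [levelφ_eq_one h hδ (by linarith), levelφ_eq_one h hδ (by linarith)]
        simp [Set.indicator_apply]
        split <;> norm_num
      · have hqB : q ∈ B n := ⟨hc, hc2⟩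
        rw [Set.indicator_of_mem hqB]
        simp only [Pi.one_apply]
        linarith [levelφ_le_one h (s₀ - δ) δ q, levelφ_nonneg h s₀ δ q]
  -- integral comparison for any probability measure
  have hint : ∀ (m : Measure E) [IsProbabilityMeasure m],
      |∫ q, A.indicator g q ∂m - ∫ q, G q ∂m| ≤ M * ((∫ q, φ₂ q ∂m) - ∫ q, φ₁ q ∂m) := by
    intro m hm
    have hig : Integrable (A.indicator g) m := integrable_indicator_bdd hAmeas hgm hM hgb
    have hiG : Integrable (fun q => G q) m := G.integrable m
    have hiφ₁ : Integrable (fun q => φ₁ q) m := φ₁.integrable m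
    have hiφ₂ : Integrable (fun q => φ₂ q) m := φ₂.integrable m
    rw [← integral_sub hig hiG]
    calc |∫ q, (A.indicator g q - G q) ∂m| ≤ ∫ q, |A.indicator g q - G q| ∂m := by
          simpa [Real.norm_eq_abs] using norm_integral_le_integral_norm (fun q => A.indicator g q - G q) (μ := m)
      _ ≤ ∫ q, M * (φ₂ q - φ₁ q) ∂m := by
          apply integral_mono (hig.sub hiG).abs ((hiφ₂.sub hiφ₁).const_mul M) hptG
      _ = M * ((∫ q, φ₂ q ∂m) - ∫ q, φ₁ q ∂m) := by
          rw [integral_const_mul, integral_sub hiφ₂ hiφ₁]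
  -- ν-band bound
  have hband : (∫ q, φ₂ q ∂ν) - ∫ q, φ₁ q ∂ν ≤ (ν (B n)).toReal := by
    have hiφ₁ : Integrable (fun q => φ₁ q) ν := φ₁.integrable ν
    have hiφ₂ : Integrable (fun q => φ₂ q) ν := φ₂.integrable ν
    have hiB : Integrable ((B n).indicator (1 : E → ℝ)) ν :=
      integrable_indicator_bdd (hBmeas n) measurable_const zero_le_one (fun q => by norm_num)
    have h1 : ∫ q, (φ₂ q - φ₁ q) ∂ν ≤ ∫ q, (B n).indicator (1 : E → ℝ) q ∂ν :=
      integral_mono (hiφ₂.sub hiφ₁) hiB hptB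
    rw [integral_sub hiφ₂ hiφ₁] at h1
    rwa [integral_indicator_one (hBmeas n)] at h1
  -- eventual closeness from weak convergence
  have hevG := (Metric.tendsto_nhds.mp (hconv G)) ε' hε'pos
  have hevφ₁ := (Metric.tendsto_nhds.mp (hconv φ₁)) ε' hε'pos
  have hevφ₂ := (Metric.tendsto_nhds.mp (hconv φ₂)) ε' hε'pos
  filter_upwards [hevG, hevφ₁, hevφ₂] with t hG' hφ₁' hφ₂'
  rw [Real.dist_eq] at hG' hφ₁' hφ₂' ⊢
  have key_t := hint (μ t)
  have key_ν := hint ν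
  have h3 : (∫ q, φ₂ q ∂(μ t)) - ∫ q, φ₁ q ∂(μ t) ≤ (ν (B n)).toReal + 2 * ε' := by
    have := abs_lt.mp hφ₁'
    have := abs_lt.mp hφ₂'
    linarith [hband]
  have htri : |∫ q, A.indicator g q ∂(μ t) - ∫ q, A.indicator g q ∂ν| ≤
      |∫ q, A.indicator g q ∂(μ t) - ∫ q, G q ∂(μ t)| + |∫ q, G q ∂(μ t) - ∫ q, G q ∂ν|
        + |∫ q, G q ∂ν - ∫ q, A.indicator g q ∂ν| := by
    have h1 := abs_sub_le (∫ q, A.indicator g q ∂(μ t)) (∫ q, G q ∂(μ t)) (∫ q, A.indicator g q ∂ν)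
    have h2 := abs_sub_le (∫ q, G q ∂(μ t)) (∫ q, G q ∂ν) (∫ q, A.indicator g q ∂ν)
    linarith
  have habs : |∫ q, G q ∂ν - ∫ q, A.indicator g q ∂ν| = |∫ q, A.indicator g q ∂ν - ∫ q, G q ∂ν| :=
    abs_sub_comm _ _
  have hb1 : |∫ q, A.indicator g q ∂(μ t) - ∫ q, G q ∂(μ t)| ≤ M * ((ν (B n)).toReal + 2 * ε') := by
    refine le_trans key_t ?_
    exact mul_le_mul_of_nonneg_left h3 hM
  have hb2 : |∫ q, A.indicator g q ∂ν - ∫ q, G q ∂ν| ≤ M * ε' := by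
    refine le_trans key_ν ?_
    have : (∫ q, φ₂ q ∂ν) - ∫ q, φ₁ q ∂ν ≤ ε' := le_trans hband hn.le
    exact mul_le_mul_of_nonneg_left this hM
  have hMK : M < K := by rw [hK]; linarith
  calc |∫ q, A.indicator g q ∂(μ t) - ∫ q, A.indicator g q ∂ν|
      ≤ M * ((ν (B n)).toReal + 2 * ε') + ε' + M * ε' := by
        rw [habs] at htri
        linarith [htri, hb1, hG', hb2]
    _ < ε := by
        have h4 : (ν (B n)).toReal < ε' := hn
        have h5 : (ν (B n)).toReal ≥ 0 := ENNReal.toReal_nonneg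
        have : M * ((ν (B n)).toReal + 2 * ε') + ε' + M * ε' ≤ (4 * M + 1) * ε' := by nlinarith
        refine lt_of_le_of_lt this ?_
        rw [hε']
        rw [div_eq_inv_mul, ← mul_assoc]
        have h8 : (4 * M + 1) * (8 * K)⁻¹ < 1 := by
          rw [mul_inv_lt_iff₀ (by positivity), one_mul]
          linarith
        nlinarith [h8, hε]
end Main
theorem rescaled_target_satisfies_tail_assumption
    {Ω : Type*} [MeasureSpace Ω] [IsProbabilityMeasure (ℙ : Measure Ω)] {d : ℕ}
    (X : Ω → (Fin d → ℝ)) (Z : Ω → ℝ)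
    (hXmeas : Measurable X) (hZmeas : Measurable Z)
    (hX0 : ℙ {ω | X ω = 0} = 0)
    (Nd : (Fin d → ℝ) → ℝ) (N1 : ((Fin d → ℝ) × ℝ) → ℝ)
    (hNd : IsNormFun Nd) (hN1 : IsNormFun N1)
    (hbasis : ∀ i, Nd (Pi.single i 1) = 1) (hbasis1 : N1 (0, 1) = 1)
    (hcompat : ∀ x, N1 (x, 0) = Nd x)
    (α : ℝ) (hα : 0 < α)
    (hRV : SurvivalRegVarying (fun ω => N1 (X ω, Z ω)) α)
    (Pinf : Measure ((Fin d → ℝ) × ℝ)) [IsProbabilityMeasure Pinf]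
    (hsupp : Pinf {q | ¬ 1 < N1 q} = 0)
    (hconv : TendstoWeakly
      (fun t => Measure.map (fun ω => t⁻¹ • (X ω, Z ω)) (ℙ[|{ω | t < N1 (X ω, Z ω)}]))
      Pinf)
    (hpos : Pinf {q | 1 < Nd q.1} ≠ 0) :
    SurvivalRegVarying (fun ω => Nd (X ω)) α ∧
    ∃ Qinf : Measure ((Fin d → ℝ) × ℝ), IsProbabilityMeasure Qinf ∧
      Qinf {q | ¬ 1 < Nd q.1} = 0 ∧
      TendstoWeakly
        (fun t => Measure.map (fun ω => (t⁻¹ • X ω, Z ω / Nd (X ω)))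
          (ℙ[|{ω | t < Nd (X ω)}]))
        Qinf := by
  classical
  set μmap : ℝ → Measure ((Fin d → ℝ) × ℝ) :=
    fun t => Measure.map (fun ω => t⁻¹ • (X ω, Z ω)) (ℙ[|{ω | t < N1 (X ω, Z ω)}]) with hμmapdef
  have hNdcont : Continuous Nd := by
    refine hNd.continuous_of_bound (fun x => ∑ i, |x i| * Nd (Pi.single i 1)) ?_ (by simp)
      (normfun_pi_le hNd)
    exact continuous_finset_sum _ fun i _ =>
      (continuous_abs.comp (continuous_apply i)).mul continuous_const
  have hN1cont : Continuous N1 := by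
    refine hN1.continuous_of_bound (fun v => Nd v.1 + |v.2| * N1 (0, 1)) ?_ ?_ ?_
    · exact (hNdcont.comp continuous_fst).add
        ((continuous_abs.comp continuous_snd).mul continuous_const)
    · simp [hNd.map_zero']
    · intro v
      have h1 : v = ((v.1, (0:ℝ)) : (Fin d → ℝ) × ℝ) + ((0, v.2)) := by
        ext <;> simp
      have h2 : ((0, v.2) : (Fin d → ℝ) × ℝ) = v.2 • ((0:Fin d → ℝ), (1:ℝ)) := by
        ext <;> simp
      calc N1 v = N1 (((v.1, (0:ℝ)) : (Fin d → ℝ) × ℝ) + ((0, v.2))) := by rw [← h1]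
        _ ≤ N1 (v.1, 0) + N1 (0, v.2) := hN1.1 _ _
        _ = Nd v.1 + |v.2| * N1 (0, 1) := by rw [hcompat, h2, hN1.2.1]
  have hNfst : Continuous (fun p : (Fin d → ℝ) × ℝ => Nd p.1) := hNdcont.comp continuous_fst
  have hSmeas : Measurable (fun ω => Nd (X ω)) := hNdcont.measurable.comp hXmeas
  have hqm : Measurable (fun ω => (X ω, Z ω)) := hXmeas.prodMk hZmeas
  have hRmeas : Measurable (fun ω => N1 (X ω, Z ω)) := hN1cont.measurable.comp hqm
  have hRsetm : ∀ t : ℝ, MeasurableSet {ω | t < N1 (X ω, Z ω)} :=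
    fun t => measurableSet_lt measurable_const hRmeas
  have hSsetm : ∀ t : ℝ, MeasurableSet {ω | t < Nd (X ω)} :=
    fun t => measurableSet_lt measurable_const hSmeas
  have hRpos : ∀ t : ℝ, ℙ {ω | t < N1 (X ω, Z ω)} ≠ 0 := by
    intro t0 h0
    have hz : ∀ t : ℝ, t0 ≤ t → ℙ {ω | t < N1 (X ω, Z ω)} = 0 := fun t ht =>
      measure_mono_null (fun ω hω => lt_of_le_of_lt ht hω) h0
    have hev : ∀ᶠ t in atTop,
        ((ℙ {ω | t * 2 < N1 (X ω, Z ω)}).toReal / (ℙ {ω | t < N1 (X ω, Z ω)}).toReal) = (0:ℝ) := by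
      filter_upwards [eventually_ge_atTop (max t0 0)] with t ht
      have ht0 : t0 ≤ t := le_trans (le_max_left _ _) ht
      have htnn : (0:ℝ) ≤ t := le_trans (le_max_right _ _) ht
      have ht2 : t0 ≤ t * 2 := by nlinarith
      rw [hz _ ht0, hz _ ht2]
      simp
    have hun : (2:ℝ) ^ (-α) = 0 :=
      tendsto_nhds_unique (Filter.Tendsto.congr' hev (hRV 2 (by norm_num))) tendsto_const_nhds
    exact absurd hun (ne_of_gt (Real.rpow_pos_of_pos (by norm_num) _))
  have hcondP : ∀ t : ℝ, IsProbabilityMeasure (ℙ[|{ω | t < N1 (X ω, Z ω)}]) :=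
    fun t => cond_isProbabilityMeasure (hRpos t)
  have hsmulm : ∀ t : ℝ, Measurable (fun ω => t⁻¹ • (X ω, Z ω)) := fun t =>
    (continuous_const_smul (t⁻¹ : ℝ)).measurable.comp hqm
  have hμmapP : ∀ t, IsProbabilityMeasure (μmap t) := fun t => by
    haveI := hcondP t
    exact Measure.isProbabilityMeasure_map (hsmulm t).aemeasurable
  obtain ⟨m, hmpos, hmle⟩ := normfun_lower_bound hN1 hN1cont ((0:Fin d → ℝ), (1:ℝ))
    (by simp [Prod.norm_def])
  have hdom : ∀ v : (Fin d → ℝ) × ℝ, Nd v.1 ≤ (1 + m⁻¹) * N1 v := by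
    intro v
    have h1 : ((v.1, (0:ℝ)) : (Fin d → ℝ) × ℝ) = v + (0, -v.2) := by ext <;> simp
    have h2 : ((0, -v.2) : (Fin d → ℝ) × ℝ) = (-v.2) • ((0:Fin d → ℝ), (1:ℝ)) := by ext <;> simp
    have h3 : N1 (v.1, 0) ≤ N1 v + |v.2| := by
      calc N1 (v.1, 0) = N1 (v + (((0:Fin d → ℝ), -v.2) : (Fin d → ℝ) × ℝ)) := by rw [← h1]
        _ ≤ N1 v + N1 (0, -v.2) := hN1.1 _ _
        _ = N1 v + |v.2| := by rw [h2, hN1.2.1, abs_neg, hbasis1, mul_one]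
    have h4 : |v.2| ≤ ‖v‖ := by
      rw [← Real.norm_eq_abs]
      exact norm_snd_le v
    have h5 : ‖v‖ ≤ m⁻¹ * N1 v := by
      rw [← div_eq_inv_mul, le_div_iff₀ hmpos]
      linarith [hmle v]
    have h6 : 0 ≤ N1 v := hN1.nonneg v
    calc Nd v.1 = N1 (v.1, 0) := (hcompat v.1).symm
      _ ≤ N1 v + |v.2| := h3
      _ ≤ N1 v + m⁻¹ * N1 v := by linarith [le_trans h4 h5]
      _ = (1 + m⁻¹) * N1 v := by ring
  obtain ⟨s₀, hs₀1, hs₀C, hs₀atom⟩ :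
      ∃ s₀ : ℝ, 1 < s₀ ∧ (1 + m⁻¹) ≤ s₀ ∧ Pinf {p : (Fin d → ℝ) × ℝ | Nd p.1 = s₀} = 0 := by
    by_contra hcon
    push_neg at hcon
    set c₀ : ℝ := max 2 (1 + m⁻¹) with hc₀
    have hcnt : Set.Countable {s : ℝ | 0 < Pinf {p : (Fin d → ℝ) × ℝ | Nd p.1 = s}} := by
      apply Measure.countable_meas_pos_of_disjoint_iUnion
        (As := fun s : ℝ => {p : (Fin d → ℝ) × ℝ | Nd p.1 = s})
      · exact fun s => hNfst.measurable (measurableSet_singleton s)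
      · intro i j hij
        refine Set.disjoint_left.mpr fun p hpi hpj => hij ?_
        rw [← hpi, ← hpj]
    have hsub : Set.Ioi c₀ ⊆ {s : ℝ | 0 < Pinf {p : (Fin d → ℝ) × ℝ | Nd p.1 = s}} := by
      intro s hs
      have h1 : 1 < s := lt_of_lt_of_le (by norm_num : (1:ℝ) < 2)
        (le_trans (le_max_left _ _) (le_of_lt hs))
      have h2 : (1 + m⁻¹) ≤ s := le_trans (le_max_right _ _) (le_of_lt hs)
      exact pos_iff_ne_zero.mpr (hcon s h1 h2)
    have hIoiC : (Set.Ioi c₀).Countable := hcnt.mono hsub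
    have hinj : Function.Injective (fun x : ℝ => c₀ + Real.exp x) := by
      intro a b hab
      exact Real.exp_injective (by simpa using hab)
    have hpre : (fun x : ℝ => c₀ + Real.exp x) ⁻¹' (Set.Ioi c₀) = Set.univ := by
      ext x
      simp [Real.exp_pos x]
    have hcu := hIoiC.preimage hinj
    rw [hpre] at hcu
    exact Cardinal.not_countable_real hcu
  have hs₀pos : (0:ℝ) < s₀ := by linarith
  set A : Set ((Fin d → ℝ) × ℝ) := {p | s₀ < Nd p.1} with hAdef
  have hAopen : IsOpen A := isOpen_lt continuous_const hNfst
  have hAmeas : MeasurableSet A := hAopen.measurableSet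
  have hAfr : Pinf (frontier A) = 0 := by
    refine measure_mono_null ?_ hs₀atom
    intro p hp
    have h1 := frontier_lt_subset_eq continuous_const hNfst hp
    simpa [eq_comm] using h1
  let Pt : ℝ → ProbabilityMeasure ((Fin d → ℝ) × ℝ) := fun t => ⟨μmap t, hμmapP t⟩
  have hPt : Tendsto Pt atTop (𝓝 (⟨Pinf, inferInstance⟩ : ProbabilityMeasure ((Fin d → ℝ) × ℝ))) := by
    refine ProbabilityMeasure.tendsto_iff_forall_integral_tendsto.mpr ?_
    exact fun f => hconv f
  have hAconv : Tendsto (fun t => ((μmap t) A).toReal) atTop (𝓝 ((Pinf A).toReal)) := by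
    have h1 := ProbabilityMeasure.tendsto_measure_of_null_frontier_of_tendsto' hPt hAfr
    exact (ENNReal.tendsto_toReal (measure_ne_top Pinf A)).comp h1
  -- key tail identity
  have hkey : ∀ t : ℝ, 0 < t →
      ℙ {ω | t < Nd (X ω)} = ℙ {ω | t / s₀ < N1 (X ω, Z ω)} * μmap (t / s₀) A := by
    intro t ht
    have hu : 0 < t / s₀ := div_pos ht hs₀pos
    have hpre : (fun ω => (t/s₀)⁻¹ • (X ω, Z ω)) ⁻¹' A = {ω | t < Nd (X ω)} := by
      ext ω
      simp only [Set.mem_preimage, hAdef, Set.mem_setOf_eq]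
      have hfst : ((t/s₀)⁻¹ • ((X ω, Z ω) : (Fin d → ℝ) × ℝ)).1 = (t/s₀)⁻¹ • X ω := rfl
      rw [hfst, hNd.2.1, abs_of_pos (inv_pos.mpr hu)]
      rw [show ((t/s₀)⁻¹ : ℝ) = s₀/t from by rw [inv_div]]
      rw [show s₀/t * Nd (X ω) = s₀ * Nd (X ω) / t from by ring]
      rw [lt_div_iff₀ ht]
      exact mul_lt_mul_iff_right₀ hs₀pos
    have hsub : {ω | t < Nd (X ω)} ⊆ {ω | t / s₀ < N1 (X ω, Z ω)} := by
      intro ω hω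
      simp only [Set.mem_setOf_eq] at hω ⊢
      have h1 : Nd (X ω) ≤ s₀ * N1 (X ω, Z ω) := by
        have h2 := hdom (X ω, Z ω)
        have hnn := hN1.nonneg (X ω, Z ω)
        nlinarith [hs₀C]
      rw [div_lt_iff₀ hs₀pos]
      nlinarith
    have hmapA : μmap (t/s₀) A = (ℙ {ω | t/s₀ < N1 (X ω, Z ω)})⁻¹ * ℙ {ω | t < Nd (X ω)} := by
      simp only [hμmapdef]
      rw [Measure.map_apply (hsmulm _) hAmeas]
      rw [cond_apply (hRsetm _)]
      rw [hpre]
      congr 1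
      rw [Set.inter_eq_right.mpr hsub]
    rw [hmapA, ← mul_assoc, ENNReal.mul_inv_cancel (hRpos _) (measure_ne_top _ _), one_mul]
  have hkeyR : ∀ t : ℝ, 0 < t →
      (ℙ {ω | t < Nd (X ω)}).toReal
        = (ℙ {ω | t / s₀ < N1 (X ω, Z ω)}).toReal * ((μmap (t / s₀)) A).toReal := by
    intro t ht
    rw [hkey t ht, ENNReal.toReal_mul]
  have hcomp1 : Tendsto (fun t : ℝ => t / s₀) atTop atTop :=
    Tendsto.atTop_div_const hs₀pos tendsto_id
  set aR : ℝ := (Pinf A).toReal with haRdef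
  have hratio : Tendsto (fun t => (ℙ {ω | t < Nd (X ω)}).toReal
      / (ℙ {ω | t < N1 (X ω, Z ω)}).toReal) atTop (𝓝 (aR * s₀ ^ α)) := by
    have h2 : Tendsto (fun t => (ℙ {ω | t * s₀⁻¹ < N1 (X ω, Z ω)}).toReal
        / (ℙ {ω | t < N1 (X ω, Z ω)}).toReal) atTop (𝓝 ((s₀⁻¹ : ℝ) ^ (-α))) :=
      hRV s₀⁻¹ (inv_pos.mpr hs₀pos)
    have h2' : ((s₀⁻¹ : ℝ) ^ (-α)) = s₀ ^ α := by
      rw [Real.inv_rpow hs₀pos.le, Real.rpow_neg hs₀pos.le, inv_inv]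
    rw [h2'] at h2
    have h1 : Tendsto (fun t => ((μmap (t / s₀)) A).toReal) atTop (𝓝 aR) := hAconv.comp hcomp1
    have h3 := h1.mul h2
    refine Filter.Tendsto.congr' ?_ h3
    filter_upwards [eventually_gt_atTop 0] with t ht
    have hset : {ω | t * s₀⁻¹ < N1 (X ω, Z ω)} = {ω | t / s₀ < N1 (X ω, Z ω)} := by
      ext ω; rw [Set.mem_setOf_eq, Set.mem_setOf_eq, div_eq_mul_inv]
    rw [hset, hkeyR t ht]
    ring
  have haA : Pinf A ≠ 0 := by
    intro h0
    have haR0 : aR = 0 := by rw [haRdef, h0, ENNReal.toReal_zero]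
    have hO : IsOpen {p : (Fin d → ℝ) × ℝ | 1 < Nd p.1} := isOpen_lt continuous_const hNfst
    have hlim1 := ProbabilityMeasure.le_liminf_measure_open_of_tendsto hPt hO
    have hub : ∀ᶠ t in atTop, (μmap t) {p : (Fin d → ℝ) × ℝ | 1 < Nd p.1}
        ≤ ENNReal.ofReal ((ℙ {ω | t < Nd (X ω)}).toReal
          / (ℙ {ω | t < N1 (X ω, Z ω)}).toReal) := by
      filter_upwards [eventually_gt_atTop 0] with t ht
      have hOm : MeasurableSet {p : (Fin d → ℝ) × ℝ | 1 < Nd p.1} := hO.measurableSet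
      have hpre1 : (fun ω => t⁻¹ • (X ω, Z ω)) ⁻¹' {p : (Fin d → ℝ) × ℝ | 1 < Nd p.1}
          = {ω | t < Nd (X ω)} := by
        ext ω
        simp only [Set.mem_preimage, Set.mem_setOf_eq]
        rw [show ((t⁻¹ • ((X ω, Z ω):(Fin d → ℝ) × ℝ)).1) = t⁻¹ • X ω from rfl, hNd.2.1,
          abs_of_pos (inv_pos.mpr ht)]
        rw [show t⁻¹ * Nd (X ω) = Nd (X ω) / t from by ring]
        rw [lt_div_iff₀ ht, one_mul]
      have hm1 : (μmap t) {p : (Fin d → ℝ) × ℝ | 1 < Nd p.1}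
          = (ℙ {ω | t < N1 (X ω, Z ω)})⁻¹
            * ℙ ({ω | t < N1 (X ω, Z ω)} ∩ {ω | t < Nd (X ω)}) := by
        simp only [hμmapdef]
        rw [Measure.map_apply (hsmulm _) hOm, cond_apply (hRsetm _), hpre1]
      rw [hm1]
      have hle1 : (ℙ {ω | t < N1 (X ω, Z ω)})⁻¹
            * ℙ ({ω | t < N1 (X ω, Z ω)} ∩ {ω | t < Nd (X ω)})
          ≤ (ℙ {ω | t < N1 (X ω, Z ω)})⁻¹ * ℙ {ω | t < Nd (X ω)} :=
        mul_le_mul_right (measure_mono Set.inter_subset_right) _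
      refine le_trans hle1 (le_of_eq ?_)
      have hfin : ℙ {ω | t < Nd (X ω)} ≠ ∞ := measure_ne_top _ _
      rw [div_eq_mul_inv, ← ENNReal.toReal_inv, ← ENNReal.toReal_mul,
        ENNReal.ofReal_toReal (ENNReal.mul_ne_top hfin (ENNReal.inv_ne_top.mpr (hRpos t))),
        mul_comm]
    have hloflim : Tendsto (fun t => ENNReal.ofReal ((ℙ {ω | t < Nd (X ω)}).toReal
        / (ℙ {ω | t < N1 (X ω, Z ω)}).toReal)) atTop (𝓝 (ENNReal.ofReal (aR * s₀ ^ α))) :=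
      (ENNReal.continuous_ofReal.tendsto _).comp hratio
    have h4 : Filter.liminf (fun t => (μmap t) {p : (Fin d → ℝ) × ℝ | 1 < Nd p.1}) atTop
        ≤ ENNReal.ofReal (aR * s₀ ^ α) := by
      calc Filter.liminf (fun t => (μmap t) {p : (Fin d → ℝ) × ℝ | 1 < Nd p.1}) atTop
          ≤ Filter.liminf (fun t => ENNReal.ofReal ((ℙ {ω | t < Nd (X ω)}).toReal
            / (ℙ {ω | t < N1 (X ω, Z ω)}).toReal)) atTop := liminf_le_liminf hub
        _ = ENNReal.ofReal (aR * s₀ ^ α) := hloflim.liminf_eq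
    rw [haR0, zero_mul, ENNReal.ofReal_zero] at h4
    have h5 : Pinf {p : (Fin d → ℝ) × ℝ | 1 < Nd p.1} = 0 :=
      le_antisymm (le_trans hlim1 h4) (by simp)
    exact hpos h5
  have haR : 0 < aR := ENNReal.toReal_pos haA (measure_ne_top _ _)
  -- preimage identity (hoisted for reuse)
  have hpreA : ∀ t : ℝ, 0 < t →
      (fun ω => (t/s₀)⁻¹ • (X ω, Z ω)) ⁻¹' A = {ω | t < Nd (X ω)} := by
    intro t ht
    have hu : 0 < t / s₀ := div_pos ht hs₀pos
    ext ω
    simp only [Set.mem_preimage, hAdef, Set.mem_setOf_eq]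
    have hfst : ((t/s₀)⁻¹ • ((X ω, Z ω) : (Fin d → ℝ) × ℝ)).1 = (t/s₀)⁻¹ • X ω := rfl
    rw [hfst, hNd.2.1, abs_of_pos (inv_pos.mpr hu)]
    rw [show ((t/s₀)⁻¹ : ℝ) = s₀/t from by rw [inv_div]]
    rw [show s₀/t * Nd (X ω) = s₀ * Nd (X ω) / t from by ring]
    rw [lt_div_iff₀ ht]
    exact mul_lt_mul_iff_right₀ hs₀pos
  have hsubRS : ∀ t : ℝ, 0 < t →
      {ω | t < Nd (X ω)} ⊆ {ω | t / s₀ < N1 (X ω, Z ω)} := by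
    intro t ht ω hω
    simp only [Set.mem_setOf_eq] at hω ⊢
    have h1 : Nd (X ω) ≤ s₀ * N1 (X ω, Z ω) := by
      have h2 := hdom (X ω, Z ω)
      have hnn := hN1.nonneg (X ω, Z ω)
      nlinarith [hs₀C]
    rw [div_lt_iff₀ hs₀pos]
    nlinarith
  constructor
  · -- Part 1 : regular variation of the tail of Nd ∘ X
    intro x hx
    have hAx : Tendsto (fun t : ℝ => t * x / s₀) atTop atTop :=
      Tendsto.atTop_div_const hs₀pos (Tendsto.atTop_mul_const hx tendsto_id)
    have h1 : Tendsto (fun t => ((μmap (t * x / s₀)) A).toReal) atTop (𝓝 aR) := hAconv.comp hAx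
    have h2 : Tendsto (fun t => ((μmap (t / s₀)) A).toReal) atTop (𝓝 aR) := hAconv.comp hcomp1
    have hfac1 : Tendsto (fun t => ((μmap (t * x / s₀)) A).toReal
        / ((μmap (t / s₀)) A).toReal) atTop (𝓝 1) := by
      have h3 := h1.div h2 haR.ne'
      simpa [div_self haR.ne', Pi.div_def] using h3
    have hfac2 : Tendsto (fun t => (ℙ {ω | t / s₀ * x < N1 (X ω, Z ω)}).toReal
        / (ℙ {ω | t / s₀ < N1 (X ω, Z ω)}).toReal) atTop (𝓝 (x ^ (-α))) := (hRV x hx).comp hcomp1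
    have h3 := hfac2.mul hfac1
    rw [mul_one] at h3
    refine Filter.Tendsto.congr' ?_ h3
    filter_upwards [eventually_gt_atTop 0] with t ht
    have htx : 0 < t * x := mul_pos ht hx
    have hseteq : {ω | t / s₀ * x < N1 (X ω, Z ω)} = {ω | t * x / s₀ < N1 (X ω, Z ω)} := by
      ext ω; rw [Set.mem_setOf_eq, Set.mem_setOf_eq, div_mul_eq_mul_div]
    rw [hseteq, hkeyR t ht, hkeyR (t*x) htx]
    ring
  · -- Part 2 : weak convergence of the rescaled pair
    set ψ : (Fin d → ℝ) × ℝ → (Fin d → ℝ) × ℝ := fun p => (s₀⁻¹ • p.1, p.2 / Nd p.1) with hψdef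
    have hψmeas : Measurable ψ := by
      apply Measurable.prodMk
      · exact (continuous_const_smul (s₀⁻¹:ℝ)).measurable.comp measurable_fst
      · exact measurable_snd.div (hNdcont.measurable.comp measurable_fst)
    have hρP : IsProbabilityMeasure ((Pinf A)⁻¹ • Pinf.restrict A) := by
      constructor
      rw [Measure.smul_apply, Measure.restrict_apply MeasurableSet.univ, Set.univ_inter,
        smul_eq_mul, ENNReal.inv_mul_cancel haA (measure_ne_top _ _)]
    haveI := hρP
    refine ⟨Measure.map ψ ((Pinf A)⁻¹ • Pinf.restrict A), ?_, ?_, ?_⟩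
    · exact Measure.isProbabilityMeasure_map hψmeas.aemeasurable
    · have hBm : MeasurableSet {q : (Fin d → ℝ) × ℝ | ¬ 1 < Nd q.1} := by
        rw [show {q : (Fin d → ℝ) × ℝ | ¬ 1 < Nd q.1}
            = {q : (Fin d → ℝ) × ℝ | 1 < Nd q.1}ᶜ from rfl]
        exact (isOpen_lt continuous_const hNfst).measurableSet.compl
      rw [Measure.map_apply hψmeas hBm, Measure.smul_apply,
        Measure.restrict_apply (hψmeas hBm)]
      have hempty : ψ ⁻¹' {q : (Fin d → ℝ) × ℝ | ¬ 1 < Nd q.1} ∩ A = ∅ := by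
        apply Set.eq_empty_iff_forall_notMem.mpr
        rintro p ⟨h1, h2⟩
        have h2' : s₀ < Nd p.1 := h2
        refine h1 (show 1 < Nd (ψ p).1 from ?_)
        have hf : (ψ p).1 = s₀⁻¹ • p.1 := rfl
        rw [hf, hNd.2.1, abs_of_pos (inv_pos.mpr hs₀pos)]
        rw [show s₀⁻¹ * Nd p.1 = Nd p.1 / s₀ from by ring, lt_div_iff₀ hs₀pos, one_mul]
        exact h2'
      rw [hempty]
      simp
    · intro f
      set g : (Fin d → ℝ) × ℝ → ℝ := fun p => f (ψ p) with hgdef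
      have hgm : Measurable g := f.continuous.measurable.comp hψmeas
      have hgb : ∀ p, |g p| ≤ ‖f‖ := fun p => by
        simpa [Real.norm_eq_abs] using f.norm_coe_le_norm (ψ p)
      have hgc : ∀ p : (Fin d → ℝ) × ℝ, Nd p.1 ≠ 0 → ContinuousAt g p := by
        intro p hp
        apply (f.continuous.continuousAt).comp
        apply ContinuousAt.prodMk
        · exact ((continuous_const_smul (s₀⁻¹:ℝ)).comp continuous_fst).continuousAt
        · exact (continuous_snd.continuousAt.div
            ((hNdcont.comp continuous_fst).continuousAt) hp)
      have hsand0 := tendsto_integral_indicator_superlevel μmap hμmapP Pinf hconv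
        hNfst hs₀pos hs₀atom hgm (norm_nonneg f) hgb hgc
      have hsand := hsand0.comp hcomp1
      have htarget : ∫ p, f p ∂(Measure.map ψ ((Pinf A)⁻¹ • Pinf.restrict A))
          = aR⁻¹ * ∫ p, A.indicator g p ∂Pinf := by
        rw [integral_map hψmeas.aemeasurable f.continuous.aestronglyMeasurable]
        rw [integral_smul_measure, ENNReal.toReal_inv, ← integral_indicator hAmeas]
        rw [smul_eq_mul, haRdef]
      rw [htarget]
      have hmA : Tendsto (fun t => ((μmap (t / s₀)) A).toReal) atTop (𝓝 aR) :=
        hAconv.comp hcomp1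
      have hlim : Tendsto (fun t => ((μmap (t / s₀)) A).toReal⁻¹
          * ∫ p, A.indicator g p ∂(μmap (t / s₀))) atTop
          (𝓝 (aR⁻¹ * ∫ p, A.indicator g p ∂Pinf)) :=
        (hmA.inv₀ haR.ne').mul hsand
      refine Filter.Tendsto.congr' ?_ hlim
      filter_upwards [eventually_gt_atTop 0, Filter.Tendsto.eventually_const_lt haR hmA]
        with t ht hmApos
      have hu : 0 < t / s₀ := div_pos ht hs₀pos
      have hSpos : ℙ {ω | t < Nd (X ω)} ≠ 0 := by
        rw [hkey t ht]
        refine mul_ne_zero (hRpos _) fun h0 => ?_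
        rw [h0] at hmApos
        simp at hmApos
      have hψ₂m : Measurable (fun ω => (t⁻¹ • X ω, Z ω / Nd (X ω))) := by
        apply Measurable.prodMk
        · exact (continuous_const_smul (t⁻¹:ℝ)).measurable.comp hXmeas
        · exact hZmeas.div hSmeas
      have hLHS : ∫ x, f x ∂(Measure.map (fun ω => (t⁻¹ • X ω, Z ω / Nd (X ω)))
            (ℙ[|{ω | t < Nd (X ω)}]))
          = (ℙ {ω | t < Nd (X ω)}).toReal⁻¹
            * ∫ ω in {ω | t < Nd (X ω)}, f (t⁻¹ • X ω, Z ω / Nd (X ω)) ∂ℙ := by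
        rw [integral_map hψ₂m.aemeasurable f.continuous.aestronglyMeasurable]
        simp only [ProbabilityTheory.cond]
        rw [integral_smul_measure, ENNReal.toReal_inv, smul_eq_mul]
      have hptw : ∀ ω, A.indicator g ((t/s₀)⁻¹ • (X ω, Z ω))
          = ({ω' | t < Nd (X ω')}).indicator
              (fun ω' => f (t⁻¹ • X ω', Z ω' / Nd (X ω'))) ω := by
        intro ω
        by_cases hω : t < Nd (X ω)
        · have hmem : ((t/s₀)⁻¹ • ((X ω, Z ω) : (Fin d → ℝ) × ℝ)) ∈ A :=
            (Set.ext_iff.mp (hpreA t ht) ω).mpr hω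
          rw [Set.indicator_of_mem hmem,
            Set.indicator_of_mem (show ω ∈ {ω' | t < Nd (X ω')} from hω)]
          show f (ψ ((t/s₀)⁻¹ • (X ω, Z ω))) = _
          congr 1
          have hNdpos : (0:ℝ) < Nd (X ω) := lt_trans ht hω
          have hufst : (ψ ((t/s₀)⁻¹ • ((X ω, Z ω):(Fin d → ℝ) × ℝ))).1
              = s₀⁻¹ • ((t/s₀)⁻¹ • X ω) := rfl
          have husnd : (ψ ((t/s₀)⁻¹ • ((X ω, Z ω):(Fin d → ℝ) × ℝ))).2
              = ((t/s₀)⁻¹ * Z ω) / Nd ((t/s₀)⁻¹ • X ω) := rfl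
          have heq1 : s₀⁻¹ • ((t/s₀)⁻¹ • X ω) = t⁻¹ • X ω := by
            rw [smul_smul]
            congr 1
            rw [inv_div, ← mul_div_assoc, inv_mul_cancel₀ hs₀pos.ne', one_div]
          have hNds : Nd ((t/s₀)⁻¹ • X ω) = (t/s₀)⁻¹ * Nd (X ω) := by
            rw [hNd.2.1, abs_of_pos (inv_pos.mpr hu)]
          have heq2 : ((t/s₀)⁻¹ * Z ω) / Nd ((t/s₀)⁻¹ • X ω) = Z ω / Nd (X ω) := by
            rw [hNds, mul_div_mul_left _ _ (ne_of_gt (inv_pos.mpr hu))]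
          exact Prod.ext (by rw [hufst, heq1]) (by rw [husnd, heq2])
        · have hnmem : ((t/s₀)⁻¹ • ((X ω, Z ω) : (Fin d → ℝ) × ℝ)) ∉ A := fun hc =>
            hω ((Set.ext_iff.mp (hpreA t ht) ω).mp hc)
          rw [Set.indicator_of_notMem hnmem,
            Set.indicator_of_notMem (show ω ∉ {ω' | t < Nd (X ω')} from hω)]
      have hRHSint : ∫ p, A.indicator g p ∂(μmap (t/s₀))
          = (ℙ {ω | t / s₀ < N1 (X ω, Z ω)}).toReal⁻¹
            * ∫ ω in {ω | t < Nd (X ω)}, f (t⁻¹ • X ω, Z ω / Nd (X ω)) ∂ℙ := by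
        simp only [hμmapdef]
        rw [integral_map (hsmulm _).aemeasurable
          ((hgm.indicator hAmeas).aestronglyMeasurable)]
        simp only [ProbabilityTheory.cond]
        rw [integral_smul_measure, ENNReal.toReal_inv, smul_eq_mul]
        congr 1
        calc ∫ ω in {ω | t / s₀ < N1 (X ω, Z ω)}, A.indicator g ((t/s₀)⁻¹ • (X ω, Z ω)) ∂ℙ
            = ∫ ω in {ω | t / s₀ < N1 (X ω, Z ω)},
                ({ω' | t < Nd (X ω')}).indicator
                  (fun ω' => f (t⁻¹ • X ω', Z ω' / Nd (X ω'))) ω ∂ℙ := by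
              simp only [hptw]
          _ = ∫ ω in {ω | t / s₀ < N1 (X ω, Z ω)} ∩ {ω | t < Nd (X ω)},
                f (t⁻¹ • X ω, Z ω / Nd (X ω)) ∂ℙ := setIntegral_indicator (hSsetm t)
          _ = ∫ ω in {ω | t < Nd (X ω)}, f (t⁻¹ • X ω, Z ω / Nd (X ω)) ∂ℙ := by
              rw [Set.inter_eq_right.mpr (hsubRS t ht)]
      rw [hRHSint, hLHS, hkeyR t ht, mul_inv]
      ring
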